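/- For any 2×2 real symmetric matrices A₁ = ![![a, c], ![c, b]] and A₂ = ![![d, e], ![e, f]], the Wintgen inequality holds for this pair: det A₁ + det A₂ + |entry (0,1) of (A₁A₂ - A₂A₁)| ≤ ((a+b)/2)² + ((d+f)/2)². -/
import Mathlib


theorem stmt6 (a b c d e f : ℝ)
    (A₁ A₂ : Matrix (Fin 2) (Fin 2) ℝ)
    (hA₁ : A₁ = !![a, c; c, b])
    (hA₂ : A₂ = !![d, e; e, f]) :
    A₁.det + A₂.det + |(A₁ * A₂ - A₂ * A₁) 0 1| ≤
      ((a + b) / 2) ^ 2 + ((d + f) / 2) ^ 2 := by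
  subst hA₁ hA₂
  simp [Matrix.det_fin_two, Matrix.mul_apply, Fin.sum_univ_succ]
  rcases abs_cases (a * e + c * f - (d * c + e * b)) with ⟨h, _⟩ | ⟨h, _⟩ <;>
    rw [h] <;> nlinarith [sq_nonneg (a - b - 2*e), sq_nonneg (d - f + 2*c),
      sq_nonneg (a - b + 2*e), sq_nonneg (d - f - 2*c)]
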